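/- Let (X,d) be a complete metric space and T : X → X a mapping satisfying F(d(Tx,Ty)) ≤ E(d(x,y)) for all x,y ∈ X with Tx ≠ Ty, where the functions F, E : (0,∞) → ℝ satisfy: (p1) F is nondecreasing; (p2) E(t) < F(t) for all t > 0; (p3) for every ε > 0 and every sequence (t_n) ⊂ (ε,∞) with t_n → ε, liminf_n E(t_n) < F(ε+0), where F(ε+0) is the right-hand limit of F at ε. Then T is a CJMP-contraction, hence a Picard operator. -/

import Mathlib

open Filter Topology

/-- `T` is a Picard operator: it has a unique fixed point `u` and every
sequence of iterates converges to `u`. -/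
def IsPicardOperator {X : Type*} [MetricSpace X] (T : X → X) : Prop :=
  ∃ u : X, T u = u ∧ (∀ v : X, T v = v → v = u) ∧
    ∀ x : X, Tendsto (fun n => T^[n] x) atTop (𝓝 u)

/-- `T` is contractive: `d(Tx,Ty) < d(x,y)` whenever `x ≠ y`. -/
def Contractive {X : Type*} [MetricSpace X] (T : X → X) : Prop :=
  ∀ x y : X, x ≠ y → dist (T x) (T y) < dist x y

/-- The Matkowski–Węgrzyk condition. -/
def MWCondition {X : Type*} [MetricSpace X] (T : X → X) : Prop :=
  ∀ ε > (0 : ℝ), ∃ δ > (0 : ℝ), ∀ x y : X,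
    ε < dist x y → dist x y < ε + δ → dist (T x) (T y) ≤ ε

/-- `T` is a CJMP-contraction. -/
def IsCJMP {X : Type*} [MetricSpace X] (T : X → X) : Prop :=
  Contractive T ∧ MWCondition T

lemma picard_of_cjmp {X : Type*} [MetricSpace X] [CompleteSpace X] [Nonempty X]
    (T : X → X) (h : IsCJMP T) : IsPicardOperator T := by
  obtain ⟨hc, hmw⟩ := h
  -- nonexpansive
  have hle : ∀ x y : X, dist (T x) (T y) ≤ dist x y := by
    intro x y
    rcases eq_or_ne x y with rfl | hne
    · simp
    · exact (hc x y hne).le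
  -- every orbit converges to a fixed point
  have key : ∀ x : X, ∃ u : X, T u = u ∧ Tendsto (fun n => T^[n] x) atTop (𝓝 u) := by
    intro x
    set a : ℕ → X := fun n => T^[n] x with ha
    have hsucc : ∀ n, a (n + 1) = T (a n) := fun n => Function.iterate_succ_apply' T n x
    set d : ℕ → ℝ := fun n => dist (a n) (a (n + 1)) with hd
    have hdanti : Antitone d := by
      refine antitone_nat_of_succ_le fun n => ?_
      show dist (a (n+1)) (a (n+2)) ≤ dist (a n) (a (n+1))
      simp only [ha, Function.iterate_succ_apply']
      exact hle _ _
    have hbdd : BddBelow (Set.range d) := ⟨0, by rintro _ ⟨n, rfl⟩; exact dist_nonneg⟩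
    have hdtend : Tendsto d atTop (𝓝 (⨅ n, d n)) := tendsto_atTop_ciInf hdanti hbdd
    have hinf0 : (⨅ n, d n) = 0 := by
      by_contra hne
      have hεpos : 0 < ⨅ n, d n := by
        rcases lt_or_eq_of_le (le_ciInf fun n => (by simp only [hd]; exact dist_nonneg : (0:ℝ) ≤ d n)) with h | h
        · exact h
        · exact absurd h.symm hne
      set ε := ⨅ n, d n
      have hεle : ∀ n, ε ≤ d n := fun n => ciInf_le hbdd n
      have hεlt : ∀ n, ε < d n := by
        intro n
        rcases lt_or_eq_of_le (hεle n) with h | h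
        · exact h
        · -- d n = ε > 0, so a n ≠ a (n+1) and by contractivity d (n+1) < ε
          exfalso
          have hne' : a n ≠ a (n + 1) := by
            intro he
            have : d n = 0 := by simp [hd, he]
            rw [this] at h; exact absurd h.symm hεpos.ne
          have : d (n + 1) < d n := by
            show dist (a (n+1)) (a (n+2)) < dist (a n) (a (n+1))
            simp only [ha, Function.iterate_succ_apply'] at hne' ⊢
            exact hc _ _ hne'
          rw [← h] at this
          exact absurd (hεle (n + 1)) (not_le_of_gt this)
      obtain ⟨δ, hδpos, hδ⟩ := hmw ε hεpos
      obtain ⟨N, hN⟩ := (hdtend.eventually (gt_mem_nhds (lt_add_of_pos_right ε hδpos))).exists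
      have h1 : dist (T (a N)) (T (a (N + 1))) ≤ ε := hδ _ _ (hεlt N) hN
      have : d (N + 1) ≤ ε := by
        show dist (a (N+1)) (a (N+2)) ≤ ε
        rw [hsucc N, hsucc (N+1)]; exact h1
      exact absurd this (not_le_of_gt (hεlt (N + 1)))
    rw [hinf0] at hdtend
    -- Cauchy
    have hcauchy : CauchySeq a := by
      rw [Metric.cauchySeq_iff']
      intro ε hεpos
      obtain ⟨δ, hδpos, hδ⟩ := hmw (ε / 2) (half_pos hεpos)
      set δ' := min δ (ε / 2) with hδ'
      have hδ'pos : 0 < δ' := lt_min hδpos (half_pos hεpos)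
      obtain ⟨N, hN⟩ := (hdtend.eventually (gt_mem_nhds hδ'pos)).exists
      refine ⟨N, fun n hn => ?_⟩
      obtain ⟨k, rfl⟩ := Nat.exists_eq_add_of_le hn
      have main : ∀ k, dist (a N) (a (N + k)) < ε / 2 + δ' := by
        intro k
        induction k with
        | zero => simpa using add_pos (half_pos hεpos) hδ'pos
        | succ k ih =>
          have step : dist (T (a N)) (T (a (N + k))) ≤ ε / 2 := by
            rcases le_or_gt (dist (a N) (a (N + k))) (ε / 2) with h | h
            · exact (hle _ _).trans h
            · exact hδ _ _ h (ih.trans_le (by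
                have : δ' ≤ δ := min_le_left _ _
                linarith))
          calc dist (a N) (a (N + k + 1))
              ≤ dist (a N) (a (N + 1)) + dist (a (N + 1)) (a (N + k + 1)) :=
                dist_triangle _ _ _
            _ = dist (a N) (a (N + 1)) + dist (T (a N)) (T (a (N + k))) := by
                rw [hsucc N, hsucc (N + k)]
            _ < δ' + ε / 2 := by
                have := hN
                exact add_lt_add_of_lt_of_le this step
            _ = ε / 2 + δ' := by ring
      calc dist (a (N + k)) (a N) = dist (a N) (a (N + k)) := dist_comm _ _
        _ < ε / 2 + δ' := main k
        _ ≤ ε / 2 + ε / 2 := by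
            have : δ' ≤ ε / 2 := min_le_right _ _
            linarith
        _ = ε := by ring
    obtain ⟨u, hu⟩ := cauchySeq_tendsto_of_complete hcauchy
    refine ⟨u, ?_, hu⟩
    -- T is continuous
    have hcont : Continuous T :=
      LipschitzWith.continuous (K := 1) (fun x y => by
        simpa [edist_dist] using ENNReal.ofReal_le_ofReal (hle x y))
    have h1 : Tendsto (fun n => a (n + 1)) atTop (𝓝 u) := hu.comp (tendsto_add_atTop_nat 1)
    have h2 : Tendsto (fun n => T (a n)) atTop (𝓝 (T u)) := (hcont.tendsto u).comp hu
    have : (fun n => a (n + 1)) = fun n => T (a n) := funext hsucc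
    rw [this] at h1
    exact (tendsto_nhds_unique h2 h1)
  -- uniqueness of fixed points
  have huniq : ∀ u v : X, T u = u → T v = v → u = v := by
    intro u v hu hv
    by_contra hne
    have := hc u v hne
    rw [hu, hv] at this
    exact lt_irrefl _ this
  obtain ⟨x0⟩ := ‹Nonempty X›
  obtain ⟨u, hu, hutend⟩ := key x0
  refine ⟨u, hu, fun v hv => huniq v u hv hu, fun x => ?_⟩
  obtain ⟨w, hw, hwtend⟩ := key x
  rwa [huniq w u hw hu] at hwtend

theorem stmt_18 {X : Type*} [MetricSpace X] [CompleteSpace X] [Nonempty X] (T : X → X)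
    (E F : ℝ → ℝ)
    (hp1 : MonotoneOn F (Set.Ioi 0))
    (hp2 : ∀ t > (0 : ℝ), E t < F t)
    (hp3 : ∀ ε > (0 : ℝ), ∀ tn : ℕ → ℝ, (∀ n, ε < tn n) → Tendsto tn atTop (𝓝 ε) →
      ∀ L : ℝ, Tendsto F (𝓝[>] ε) (𝓝 L) → liminf (fun n => E (tn n)) atTop < L)
    (hcontr : ∀ x y : X, T x ≠ T y → F (dist (T x) (T y)) ≤ E (dist x y)) :
    IsCJMP T ∧ IsPicardOperator T := by
  have hcontractive : Contractive T := by
    intro x y hne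
    have hxy : 0 < dist x y := dist_pos.mpr hne
    rcases eq_or_ne (T x) (T y) with he | hne'
    · simpa [he] using hxy
    · have hTxy : 0 < dist (T x) (T y) := dist_pos.mpr hne'
      have h1 : F (dist (T x) (T y)) ≤ E (dist x y) := hcontr x y hne'
      have h2 : E (dist x y) < F (dist x y) := hp2 _ hxy
      by_contra hcon
      push_neg at hcon
      have := hp1 (Set.mem_Ioi.mpr hxy) (Set.mem_Ioi.mpr hTxy) hcon
      linarith
  have hmw : MWCondition T := by
    intro ε hεpos
    by_contra hcon
    push_neg at hcon
    -- for each n, choose x_n, y_n with ε < dist < ε + 1/(n+1) and dist (Tx) (Ty) > ε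
    have hsel : ∀ n : ℕ, ∃ p : X × X, ε < dist p.1 p.2 ∧ dist p.1 p.2 < ε + 1 / (n + 1) ∧
        ε < dist (T p.1) (T p.2) := by
      intro n
      obtain ⟨x, y, h1, h2, h3⟩ := hcon (1 / (n + 1)) (by positivity)
      exact ⟨(x, y), h1, h2, h3⟩
    choose p hp1' hp2' hp3' using hsel
    set tn : ℕ → ℝ := fun n => dist (p n).1 (p n).2 with htn
    have htn_gt : ∀ n, ε < tn n := hp1'
    have htn_tend : Tendsto tn atTop (𝓝 ε) := by
      have hupper : Tendsto (fun n : ℕ => ε + 1 / ((n : ℝ) + 1)) atTop (𝓝 (ε + 0)) :=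
        tendsto_const_nhds.add tendsto_one_div_add_atTop_nhds_zero_nat
      rw [add_zero] at hupper
      exact tendsto_of_tendsto_of_tendsto_of_le_of_le tendsto_const_nhds hupper
        (fun n => (htn_gt n).le) (fun n => (hp2' n).le)
    -- right-hand limit of F at ε
    have hmono : MonotoneOn F (Set.Ioi ε) :=
      hp1.mono (fun s hs => lt_trans hεpos hs)
    have hbdd : BddBelow (F '' Set.Ioi ε) := by
      refine ⟨F ε, ?_⟩
      rintro _ ⟨s, hs, rfl⟩
      exact hp1 (Set.mem_Ioi.mpr hεpos) (Set.mem_Ioi.mpr (lt_trans hεpos hs)) (le_of_lt hs)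
    have hL : Tendsto F (𝓝[>] ε) (𝓝 (sInf (F '' Set.Ioi ε))) :=
      MonotoneOn.tendsto_nhdsGT hmono hbdd
    set L := sInf (F '' Set.Ioi ε) with hLdef
    have hlim := hp3 ε hεpos tn htn_gt htn_tend L hL
    -- but each E (tn n) ≥ L
    have hge : ∀ n, L ≤ E (tn n) := by
      intro n
      have hne' : T (p n).1 ≠ T (p n).2 :=
        dist_pos.mp (lt_trans hεpos (hp3' n))
      have h1 : F (dist (T (p n).1) (T (p n).2)) ≤ E (tn n) := hcontr _ _ hne'
      refine le_trans ?_ h1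
      refine csInf_le hbdd ?_
      exact ⟨_, Set.mem_Ioi.mpr (hp3' n), rfl⟩
    -- E (tn n) bounded above by F (ε + 1)
    have hub : ∀ n, E (tn n) ≤ F (ε + 1) := by
      intro n
      have h1 : tn n ≤ ε + 1 := by
        have := hp2' n
        have h2 : 1 / ((n : ℝ) + 1) ≤ 1 := by
          rw [div_le_one (by positivity)]; linarith [Nat.cast_nonneg (α := ℝ) n]
        linarith
      have h2 : E (tn n) < F (tn n) := hp2 _ (lt_trans hεpos (htn_gt n))
      refine h2.le.trans (hp1 (Set.mem_Ioi.mpr (lt_trans hεpos (htn_gt n)))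
        (Set.mem_Ioi.mpr (by linarith)) h1)
    have hbddu : IsBoundedUnder (· ≤ ·) atTop (fun n => E (tn n)) :=
      ⟨F (ε + 1), eventually_map.2 (Eventually.of_forall hub)⟩
    have hcobdd : IsCoboundedUnder (· ≥ ·) atTop (fun n => E (tn n)) :=
      hbddu.isCoboundedUnder_ge
    have : L ≤ liminf (fun n => E (tn n)) atTop :=
      le_liminf_of_le hcobdd (Eventually.of_forall hge)
    linarith
  exact ⟨⟨hcontractive, hmw⟩, picard_of_cjmp T ⟨hcontractive, hmw⟩⟩
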